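/- arXiv:1004.1268 — 3 statements merged into one kernel-verified Lean document; each statement's English description precedes it below -/
import Mathlib

section
/- The connection with coefficients Γ^μ_{νλ}(x) = −(x_ν δ^μ_λ + δ^μ_ν x_λ)/(x·x), defined on the open set {x ∈ ℝ⁴ : x·x ≠ 0}, is compatible with the degenerate metric tensor g⁻_{μν} = −(l²/(x·x)²)(η_{μρ}η_{ντ} − η_{μν}η_{ρτ})x^ρx^τ, i.e., ∂_λ g_{μν} − Γ^κ_{λν}g_{μκ} − Γ^κ_{μλ}g_{κν} = 0 for all μ, ν, λ. -/
open scoped BigOperators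

/-- Sign of the Minkowski metric η = diag(1,-1,-1,-1). -/
def etaS (μ : Fin 4) : ℝ := if μ = 0 then 1 else -1

/-- Minkowski metric components η_{μν}. -/
def etaM (μ ν : Fin 4) : ℝ := if μ = ν then etaS μ else 0

/-- Minkowski inner product x·y = η_{μν}x^μy^ν. -/
def mdot (x y : Fin 4 → ℝ) : ℝ := ∑ μ, etaS μ * x μ * y μ

/-- Lowered components x_μ = η_{μν}x^ν. -/
def lowerIdx (x : Fin 4 → ℝ) (μ : Fin 4) : ℝ := etaS μ * x μ

/-- Connection coefficients Γ^μ_{νλ}(x) = −(x_ν δ^μ_λ + δ^μ_ν x_λ)/(x·x). -/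
noncomputable def Gam (x : Fin 4 → ℝ) (μ ν lam : Fin 4) : ℝ :=
  -((lowerIdx x ν) * (if μ = lam then (1:ℝ) else 0)
    + (if μ = ν then (1:ℝ) else 0) * lowerIdx x lam) / mdot x x

/-- The degenerate metric, sign `s`: g_{μν} = s·(l²/(x·x)²)(η_{μρ}η_{ντ} − η_{μν}η_{ρτ})x^ρx^τ. -/
noncomputable def gten (l s : ℝ) (x : Fin 4 → ℝ) (μ ν : Fin 4) : ℝ :=
  s * (l ^ 2 / (mdot x x) ^ 2) *
    ∑ ρ, ∑ τ, (etaM μ ρ * etaM ν τ - etaM μ ν * etaM ρ τ) * x ρ * x τ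

/-- The degenerate (2,0)-tensor h^{μν} = l⁻⁴(x·x)x^μx^ν. -/
noncomputable def hten (l : ℝ) (x : Fin 4 → ℝ) (μ ν : Fin 4) : ℝ :=
  (1 / l ^ 4) * mdot x x * x μ * x ν

/-- Partial derivative ∂_μ f at x. -/
noncomputable def pd (f : (Fin 4 → ℝ) → ℝ) (μ : Fin 4) (x : Fin 4 → ℝ) : ℝ :=
  fderiv ℝ f x (Pi.single μ 1)

/- ### Auxiliary lemmas -/

lemma gten_eq (l s : ℝ) (x : Fin 4 → ℝ) (μ ν : Fin 4) :
    gten l s x μ ν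
      = s * l ^ 2 * (etaS μ * x μ * (etaS ν * x ν) - etaM μ ν * mdot x x) / (mdot x x) ^ 2 := by
  have h : ∑ ρ, ∑ τ, (etaM μ ρ * etaM ν τ - etaM μ ν * etaM ρ τ) * x ρ * x τ
      = etaS μ * x μ * (etaS ν * x ν) - etaM μ ν * mdot x x := by
    fin_cases μ <;> fin_cases ν <;>
      simp [etaM, etaS, mdot, Fin.sum_univ_four] <;> ring
  rw [gten, h]; ring

lemma hasFDerivAt_Q (x : Fin 4 → ℝ) :
    HasFDerivAt (fun p : Fin 4 → ℝ => mdot p p)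
      (∑ i : Fin 4, (2 * etaS i * x i) • (ContinuousLinearMap.proj i : (Fin 4 → ℝ) →L[ℝ] ℝ)) x := by
  have h : (fun p : Fin 4 → ℝ => mdot p p) = fun p => ∑ i : Fin 4, etaS i * p i * p i := rfl
  rw [h]
  refine HasFDerivAt.fun_sum fun i _ => ?_
  have hp : HasFDerivAt (fun p : Fin 4 → ℝ => p i)
      (ContinuousLinearMap.proj i : (Fin 4 → ℝ) →L[ℝ] ℝ) x :=
    (ContinuousLinearMap.proj i : (Fin 4 → ℝ) →L[ℝ] ℝ).hasFDerivAt
  have h2 := (hp.const_mul (etaS i)).fun_mul hp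
  refine h2.congr_fderiv ?_
  ext v
  simp [ContinuousLinearMap.smul_apply, smul_eq_mul]
  ring

lemma pd_gten (l s : ℝ) (x : Fin 4 → ℝ) (hD : mdot x x ≠ 0) (μ ν lam : Fin 4) :
    pd (fun p => s * l ^ 2 * (etaS μ * p μ * (etaS ν * p ν) - etaM μ ν * mdot p p) / (mdot p p) ^ 2) lam x
      = s * l ^ 2 * ((etaM μ lam * (etaS ν * x ν) + etaS μ * x μ * etaM ν lam
            + 2 * etaM μ ν * (etaS lam * x lam)) / (mdot x x) ^ 2
          - 4 * (etaS μ * x μ) * (etaS ν * x ν) * (etaS lam * x lam) / (mdot x x) ^ 3) := by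
  have hQ := hasFDerivAt_Q x
  have hμ : HasFDerivAt (fun p : Fin 4 → ℝ => etaS μ * p μ)
      (etaS μ • (ContinuousLinearMap.proj μ : (Fin 4 → ℝ) →L[ℝ] ℝ)) x :=
    (ContinuousLinearMap.proj μ : (Fin 4 → ℝ) →L[ℝ] ℝ).hasFDerivAt.const_mul _
  have hν : HasFDerivAt (fun p : Fin 4 → ℝ => etaS ν * p ν)
      (etaS ν • (ContinuousLinearMap.proj ν : (Fin 4 → ℝ) →L[ℝ] ℝ)) x :=
    (ContinuousLinearMap.proj ν : (Fin 4 → ℝ) →L[ℝ] ℝ).hasFDerivAt.const_mul _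
  have hN := ((hμ.fun_mul hν).fun_sub (hQ.const_mul (etaM μ ν))).const_mul (s * l ^ 2)
  have hD2 : (mdot x x) ^ 2 ≠ 0 := pow_ne_zero _ hD
  have hQ2 : HasFDerivAt (fun p : Fin 4 → ℝ => mdot p p ^ 2)
      (mdot x x • (∑ i : Fin 4, (2 * etaS i * x i) • (ContinuousLinearMap.proj i : (Fin 4 → ℝ) →L[ℝ] ℝ))
        + mdot x x • (∑ i : Fin 4, (2 * etaS i * x i) • (ContinuousLinearMap.proj i : (Fin 4 → ℝ) →L[ℝ] ℝ))) x := by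
    simpa only [pow_two] using hQ.fun_mul hQ
  have hinv : HasFDerivAt (fun p : Fin 4 → ℝ => (mdot p p ^ 2)⁻¹)
      ((ContinuousLinearMap.smulRight (1 : ℝ →L[ℝ] ℝ) (-((mdot x x ^ 2) ^ 2)⁻¹)).comp
        (mdot x x • (∑ i : Fin 4, (2 * etaS i * x i) • (ContinuousLinearMap.proj i : (Fin 4 → ℝ) →L[ℝ] ℝ))
          + mdot x x • (∑ i : Fin 4, (2 * etaS i * x i) • (ContinuousLinearMap.proj i : (Fin 4 → ℝ) →L[ℝ] ℝ)))) x := by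
    exact (hasFDerivAt_inv hD2).comp x hQ2
  have H := hN.fun_mul hinv
  have hfun : (fun p : Fin 4 → ℝ =>
        s * l ^ 2 * (etaS μ * p μ * (etaS ν * p ν) - etaM μ ν * mdot p p) / mdot p p ^ 2)
      = fun p => (s * l ^ 2 * (etaS μ * p μ * (etaS ν * p ν) - etaM μ ν * mdot p p)) * (mdot p p ^ 2)⁻¹ := by
    funext p; rw [div_eq_mul_inv]
  rw [pd, hfun, H.fderiv]
  simp only [ContinuousLinearMap.smul_apply, ContinuousLinearMap.sub_apply,
    ContinuousLinearMap.add_apply, ContinuousLinearMap.comp_apply,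
    ContinuousLinearMap.smulRight_apply, ContinuousLinearMap.one_apply,
    ContinuousLinearMap.coe_sum', Finset.sum_apply,
    ContinuousLinearMap.proj_apply, Pi.single_apply, smul_eq_mul, mul_ite, mul_one, mul_zero,
    Finset.sum_ite_eq', Finset.mem_univ, if_true, etaM]
  split_ifs <;> field_simp <;> ring

lemma gam_sum (x : Fin 4 → ℝ) (a b : Fin 4) (f : Fin 4 → ℝ) :
    ∑ κ, Gam x κ a b * f κ = -(lowerIdx x a * f b + lowerIdx x b * f a) / mdot x x := by
  rw [Fin.sum_univ_four]
  fin_cases a <;> fin_cases b <;> simp [Gam] <;> ring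

lemma etaM_comm (a b : Fin 4) : etaM a b = etaM b a := by
  rcases eq_or_ne a b with h | h
  · subst h; rfl
  · simp [etaM, h, h.symm]

/-- The connection Γ is compatible with the degenerate metric g⁻:
∂_λ g_{μν} − Γ^κ_{λν}g_{μκ} − Γ^κ_{μλ}g_{κν} = 0 on {x·x ≠ 0}. -/
theorem connection_compatible_g (l : ℝ) (hl : 0 < l) :
    ∀ x : Fin 4 → ℝ, mdot x x ≠ 0 → ∀ μ ν lam : Fin 4,
      pd (fun p => gten l (-1) p μ ν) lam x
        - (∑ κ, Gam x κ lam ν * gten l (-1) x μ κ)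
        - (∑ κ, Gam x κ μ lam * gten l (-1) x κ ν) = 0 := by
  intro x hD μ ν lam
  have hfun : (fun p => gten l (-1) p μ ν)
      = fun p => (-1 : ℝ) * l ^ 2 * (etaS μ * p μ * (etaS ν * p ν) - etaM μ ν * mdot p p) / (mdot p p) ^ 2 := by
    funext p; exact gten_eq l (-1) p μ ν
  rw [hfun, pd_gten l (-1) x hD μ ν lam,
    gam_sum x lam ν (fun κ => gten l (-1) x μ κ),
    gam_sum x μ lam (fun κ => gten l (-1) x κ ν)]
  simp only [gten_eq, lowerIdx, etaM_comm lam ν, etaM_comm lam μ]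
  field_simp
  ring
end

section
/- The connection with coefficients Γ^μ_{νλ}(x) = −(x_ν δ^μ_λ + δ^μ_ν x_λ)/(x·x) is compatible with the degenerate (2,0)-tensor field h^{μν} = l⁻⁴(x·x)x^μx^ν, i.e., ∂_λ h^{μν} + Γ^ν_{λκ}h^{μκ} + Γ^μ_{λκ}h^{κν} = 0 for all μ, ν, λ on {x ∈ ℝ⁴ : x·x ≠ 0}. -/
open scoped BigOperators

lemma mdot_hasFDerivAt (x : Fin 4 → ℝ) :
    HasFDerivAt (fun p : Fin 4 → ℝ => mdot p p)
      (∑ α : Fin 4, (2 * etaS α * x α) • (ContinuousLinearMap.proj α : (Fin 4 → ℝ) →L[ℝ] ℝ)) x := by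
  unfold mdot
  apply HasFDerivAt.fun_sum
  intro α _
  have h := ((hasFDerivAt_apply (𝕜 := ℝ) α x).const_mul (etaS α)).fun_mul (hasFDerivAt_apply (𝕜 := ℝ) α x)
  refine h.congr_fderiv ?_
  ext v
  simp [ContinuousLinearMap.smul_apply]
  ring

lemma hten_hasFDerivAt (l : ℝ) (x : Fin 4 → ℝ) (μ ν : Fin 4) :
    HasFDerivAt (fun p => hten l p μ ν)
      (((x ν * ((1/l^4) * mdot x x)) • (ContinuousLinearMap.proj μ : (Fin 4 → ℝ) →L[ℝ] ℝ)
        + (x ν * x μ) • ((1/l^4) • (∑ α : Fin 4, (2 * etaS α * x α) • ContinuousLinearMap.proj α)))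
        + (((1/l^4) * mdot x x * x μ) • (ContinuousLinearMap.proj ν : (Fin 4 → ℝ) →L[ℝ] ℝ))) x := by
  unfold hten
  have h := (((mdot_hasFDerivAt x).const_mul (1/l^4)).fun_mul (hasFDerivAt_apply (𝕜 := ℝ) μ x)).fun_mul
    (hasFDerivAt_apply (𝕜 := ℝ) ν x)
  refine h.congr_fderiv ?_
  ext v
  simp [ContinuousLinearMap.smul_apply, ContinuousLinearMap.add_apply]
  ring

lemma pd_hten (l : ℝ) (x : Fin 4 → ℝ) (μ ν lam : Fin 4) :
    pd (fun p => hten l p μ ν) lam x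
      = (1/l^4) * (2 * lowerIdx x lam * x μ * x ν
          + mdot x x * ((if μ = lam then (1:ℝ) else 0) * x ν
              + x μ * (if ν = lam then (1:ℝ) else 0))) := by
  have h := (hten_hasFDerivAt l x μ ν).fderiv
  unfold pd
  rw [h]
  simp [ContinuousLinearMap.add_apply, ContinuousLinearMap.smul_apply,
    ContinuousLinearMap.sum_apply, ContinuousLinearMap.proj_apply, Pi.single_apply,
    Finset.mul_sum, mul_ite, Finset.sum_ite_eq', lowerIdx]
  split_ifs <;> ring

lemma sum_one (l : ℝ) (hl : l ≠ 0) (x : Fin 4 → ℝ) (hQ : mdot x x ≠ 0) (μ ν lam : Fin 4) :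
    (∑ κ, Gam x ν lam κ * hten l x μ κ)
      = -((1/l^4) * (lowerIdx x lam * x μ * x ν
          + (if ν = lam then (1:ℝ) else 0) * x μ * mdot x x)) := by
  have key : ∀ κ : Fin 4, Gam x ν lam κ * hten l x μ κ =
      (-((1/l^4) * lowerIdx x lam * x μ)) * ((if ν = κ then (1:ℝ) else 0) * x κ)
      + (-((1/l^4) * (if ν = lam then (1:ℝ) else 0) * x μ)) * (lowerIdx x κ * x κ) := by
    intro κ; unfold Gam hten; field_simp; split_ifs <;> ring
  rw [Finset.sum_congr rfl fun κ _ => key κ, Finset.sum_add_distrib,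
    ← Finset.mul_sum, ← Finset.mul_sum]
  have e1 : ∑ κ, (if ν = κ then (1:ℝ) else 0) * x κ = x ν := by simp
  have e2 : ∑ κ : Fin 4, lowerIdx x κ * x κ = mdot x x := by
    simp [lowerIdx, mdot, mul_assoc]
  rw [e1, e2]; ring

lemma sum_two (l : ℝ) (hl : l ≠ 0) (x : Fin 4 → ℝ) (hQ : mdot x x ≠ 0) (μ ν lam : Fin 4) :
    (∑ κ, Gam x μ lam κ * hten l x κ ν)
      = -((1/l^4) * (lowerIdx x lam * x μ * x ν
          + (if μ = lam then (1:ℝ) else 0) * x ν * mdot x x)) := by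
  have key : ∀ κ : Fin 4, Gam x μ lam κ * hten l x κ ν =
      (-((1/l^4) * lowerIdx x lam * x ν)) * ((if μ = κ then (1:ℝ) else 0) * x κ)
      + (-((1/l^4) * (if μ = lam then (1:ℝ) else 0) * x ν)) * (lowerIdx x κ * x κ) := by
    intro κ; unfold Gam hten; field_simp; split_ifs <;> ring
  rw [Finset.sum_congr rfl fun κ _ => key κ, Finset.sum_add_distrib,
    ← Finset.mul_sum, ← Finset.mul_sum]
  have e1 : ∑ κ, (if μ = κ then (1:ℝ) else 0) * x κ = x μ := by simp
  have e2 : ∑ κ : Fin 4, lowerIdx x κ * x κ = mdot x x := by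
    simp [lowerIdx, mdot, mul_assoc]
  rw [e1, e2]; ring


/-- The connection Γ is compatible with the degenerate (2,0)-tensor h:
∂_λ h^{μν} + Γ^ν_{λκ}h^{μκ} + Γ^μ_{λκ}h^{κν} = 0 on {x·x ≠ 0}. -/
theorem connection_compatible_h (l : ℝ) (hl : 0 < l) :
    ∀ x : Fin 4 → ℝ, mdot x x ≠ 0 → ∀ μ ν lam : Fin 4,
      pd (fun p => hten l p μ ν) lam x
        + (∑ κ, Gam x ν lam κ * hten l x μ κ)
        + (∑ κ, Gam x μ lam κ * hten l x κ ν) = 0 := by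
  intro x hQ μ ν lam
  rw [pd_hten, sum_one l hl.ne' x hQ μ ν lam, sum_two l hl.ne' x hQ μ ν lam]
  ring
end

section
/- Under the coordinate change x⁰ = l²ρ⁻¹sinh(ψ/l), x¹ = l²ρ⁻¹cosh(ψ/l)sinθcosφ, x² = l²ρ⁻¹cosh(ψ/l)sinθsinφ, x³ = l²ρ⁻¹cosh(ψ/l)cosθ (valid where x·x < 0, with x·x = −l⁴/ρ²), the pullback of g⁺_{μν}dx^μdx^ν = (l²/(x·x)²)(η_{μρ}η_{ντ} − η_{μν}η_{ρτ})x^ρx^τ dx^μdx^ν equals dψ² − l²cosh²(ψ/l)(dθ² + sin²θ dφ²); in particular it is independent of ρ and has no dρ component. -/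
open scoped BigOperators

/-- The parametrization x⁰ = l²ρ⁻¹sinh(ψ/l), xⁱ = l²ρ⁻¹cosh(ψ/l)·(unit vector),
in coordinates y = (ρ, ψ, θ, φ), valid where x·x < 0. -/
noncomputable def F19 (l : ℝ) (y : Fin 4 → ℝ) : Fin 4 → ℝ :=
  ![l ^ 2 / y 0 * Real.sinh (y 1 / l),
    l ^ 2 / y 0 * Real.cosh (y 1 / l) * Real.sin (y 2) * Real.cos (y 3),
    l ^ 2 / y 0 * Real.cosh (y 1 / l) * Real.sin (y 2) * Real.sin (y 3),
    l ^ 2 / y 0 * Real.cosh (y 1 / l) * Real.cos (y 2)]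

theorem pd_mul4 (g0 g1 g2 g3 : ℝ → ℝ) (d0 d1 d2 d3 : ℝ) (y : Fin 4 → ℝ)
    (h0 : HasDerivAt g0 d0 (y 0)) (h1 : HasDerivAt g1 d1 (y 1))
    (h2 : HasDerivAt g2 d2 (y 2)) (h3 : HasDerivAt g3 d3 (y 3)) (a : Fin 4) :
    pd (fun z => g0 (z 0) * g1 (z 1) * g2 (z 2) * g3 (z 3)) a y =
      (if a = 0 then d0 else g0 (y 0)) * (if a = 1 then d1 else g1 (y 1)) *
      (if a = 2 then d2 else g2 (y 2)) * (if a = 3 then d3 else g3 (y 3)) := by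
  have pr : ∀ i : Fin 4, HasFDerivAt (fun z : Fin 4 → ℝ => z i)
      (ContinuousLinearMap.proj i : (Fin 4 → ℝ) →L[ℝ] ℝ) y :=
    fun i => (ContinuousLinearMap.proj i : (Fin 4 → ℝ) →L[ℝ] ℝ).hasFDerivAt
  have u0 := h0.comp_hasFDerivAt y (pr 0)
  have u1 := h1.comp_hasFDerivAt y (pr 1)
  have u2 := h2.comp_hasFDerivAt y (pr 2)
  have u3 := h3.comp_hasFDerivAt y (pr 3)
  simp only [Function.comp_def] at u0 u1 u2 u3
  have U := ((u0.mul u1).mul u2).mul u3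
  rw [pd, show (fun z : Fin 4 → ℝ => g0 (z 0) * g1 (z 1) * g2 (z 2) * g3 (z 3)) = ((fun x : Fin 4 → ℝ => g0 (x 0)) * (fun x => g1 (x 1)) * (fun x => g2 (x 2)) * (fun x => g3 (x 3))) from rfl, U.fderiv]
  simp [ContinuousLinearMap.proj_apply, Pi.single_apply, Function.comp]
  fin_cases a <;> simp <;> ring

/-- Jacobian matrix ∂x^μ/∂y^a. -/
noncomputable def Jm (l : ℝ) (y : Fin 4 → ℝ) : Fin 4 → Fin 4 → ℝ :=
  ![![-(l ^ 2 / (y 0) ^ 2) * Real.sinh (y 1 / l), l / y 0 * Real.cosh (y 1 / l), 0, 0],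
    ![-(l ^ 2 / (y 0) ^ 2) * Real.cosh (y 1 / l) * Real.sin (y 2) * Real.cos (y 3),
      l / y 0 * Real.sinh (y 1 / l) * Real.sin (y 2) * Real.cos (y 3),
      l ^ 2 / y 0 * Real.cosh (y 1 / l) * Real.cos (y 2) * Real.cos (y 3),
      -(l ^ 2 / y 0 * Real.cosh (y 1 / l) * Real.sin (y 2) * Real.sin (y 3))],
    ![-(l ^ 2 / (y 0) ^ 2) * Real.cosh (y 1 / l) * Real.sin (y 2) * Real.sin (y 3),
      l / y 0 * Real.sinh (y 1 / l) * Real.sin (y 2) * Real.sin (y 3),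
      l ^ 2 / y 0 * Real.cosh (y 1 / l) * Real.cos (y 2) * Real.sin (y 3),
      l ^ 2 / y 0 * Real.cosh (y 1 / l) * Real.sin (y 2) * Real.cos (y 3)],
    ![-(l ^ 2 / (y 0) ^ 2) * Real.cosh (y 1 / l) * Real.cos (y 2),
      l / y 0 * Real.sinh (y 1 / l) * Real.cos (y 2),
      -(l ^ 2 / y 0 * Real.cosh (y 1 / l) * Real.sin (y 2)), 0]]

theorem pd_F19 (l : ℝ) (hl : l ≠ 0) (y : Fin 4 → ℝ) (hy : y 0 ≠ 0) (μ a : Fin 4) :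
    pd (fun z => F19 l z μ) a y = Jm l y μ a := by
  have hg0 : HasDerivAt (fun t : ℝ => l ^ 2 * t⁻¹) (l ^ 2 * -(((y 0) ^ 2)⁻¹)) (y 0) :=
    (hasDerivAt_inv hy).const_mul (l ^ 2)
  have hdiv : HasDerivAt (fun t : ℝ => t / l) (1 / l) (y 1) := (hasDerivAt_id' (y 1)).div_const l
  have hS := (Real.hasDerivAt_sinh (y 1 / l)).comp (y 1) hdiv
  have hC := (Real.hasDerivAt_cosh (y 1 / l)).comp (y 1) hdiv
  simp only [Function.comp_def] at hS hC
  have hsin := Real.hasDerivAt_sin (y 2)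
  have hcos := Real.hasDerivAt_cos (y 2)
  have hsin3 := Real.hasDerivAt_sin (y 3)
  have hcos3 := Real.hasDerivAt_cos (y 3)
  fin_cases μ
  · show pd (fun z => F19 l z 0) a y = Jm l y 0 a
    rw [show (fun z => F19 l z 0) = (fun z : Fin 4 → ℝ =>
        (fun t : ℝ => l ^ 2 * t⁻¹) (z 0) * (fun t : ℝ => Real.sinh (t / l)) (z 1) *
        (fun _ : ℝ => (1:ℝ)) (z 2) * (fun _ : ℝ => (1:ℝ)) (z 3))
        from funext fun z => by simp [F19, div_eq_mul_inv]]
    rw [pd_mul4 _ _ _ _ _ _ _ _ y hg0 hS (hasDerivAt_const _ _) (hasDerivAt_const _ _) a]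
    fin_cases a <;> simp [Jm] <;> field_simp <;> first | ring1 | tauto | (refine Or.inl (Or.inl ?_); ring1) | (refine Or.inl ?_; ring1)
  · show pd (fun z => F19 l z 1) a y = Jm l y 1 a
    rw [show (fun z => F19 l z 1) = (fun z : Fin 4 → ℝ =>
        (fun t : ℝ => l ^ 2 * t⁻¹) (z 0) * (fun t : ℝ => Real.cosh (t / l)) (z 1) *
        (fun t : ℝ => Real.sin t) (z 2) * (fun t : ℝ => Real.cos t) (z 3))
        from funext fun z => by simp [F19, div_eq_mul_inv]]
    rw [pd_mul4 _ _ _ _ _ _ _ _ y hg0 hC hsin hcos3 a]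
    fin_cases a <;> simp [Jm] <;> field_simp <;> first | ring1 | tauto | (refine Or.inl (Or.inl ?_); ring1) | (refine Or.inl ?_; ring1)
  · show pd (fun z => F19 l z 2) a y = Jm l y 2 a
    rw [show (fun z => F19 l z 2) = (fun z : Fin 4 → ℝ =>
        (fun t : ℝ => l ^ 2 * t⁻¹) (z 0) * (fun t : ℝ => Real.cosh (t / l)) (z 1) *
        (fun t : ℝ => Real.sin t) (z 2) * (fun t : ℝ => Real.sin t) (z 3))
        from funext fun z => by simp [F19, div_eq_mul_inv]]
    rw [pd_mul4 _ _ _ _ _ _ _ _ y hg0 hC hsin hsin3 a]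
    fin_cases a <;> simp [Jm] <;> field_simp <;> first | ring1 | tauto | (refine Or.inl (Or.inl ?_); ring1) | (refine Or.inl ?_; ring1)
  · show pd (fun z => F19 l z 3) a y = Jm l y 3 a
    rw [show (fun z => F19 l z 3) = (fun z : Fin 4 → ℝ =>
        (fun t : ℝ => l ^ 2 * t⁻¹) (z 0) * (fun t : ℝ => Real.cosh (t / l)) (z 1) *
        (fun t : ℝ => Real.cos t) (z 2) * (fun _ : ℝ => (1:ℝ)) (z 3))
        from funext fun z => by simp [F19, div_eq_mul_inv]]
    rw [pd_mul4 _ _ _ _ _ _ _ _ y hg0 hC hcos (hasDerivAt_const _ _) a]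
    fin_cases a <;> simp [Jm] <;> field_simp <;> first | ring1 | tauto | (refine Or.inl (Or.inl ?_); ring1) | (refine Or.inl ?_; ring1)


set_option maxHeartbeats 2000000 in
/-- The pullback of g⁺_{μν}dx^μdx^ν = (l²/(x·x)²)(η_{μρ}η_{ντ} − η_{μν}η_{ρτ})x^ρx^τ dx^μdx^ν
under the above parametrization equals dψ² − l²cosh²(ψ/l)(dθ² + sin²θ dφ²); in
particular it is independent of ρ and has no dρ component. -/
theorem pullback_g_upper (l : ℝ) (hl : 0 < l) :
    ∀ y : Fin 4 → ℝ, 0 < y 0 → ∀ a b : Fin 4,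
      (∑ μ, ∑ ν, gten l 1 (F19 l y) μ ν
          * pd (fun z => F19 l z μ) a y * pd (fun z => F19 l z ν) b y) =
      (if a = 1 ∧ b = 1 then 1
       else if a = 2 ∧ b = 2 then -(l ^ 2 * Real.cosh (y 1 / l) ^ 2)
       else if a = 3 ∧ b = 3 then
         -(l ^ 2 * Real.cosh (y 1 / l) ^ 2 * Real.sin (y 2) ^ 2)
       else 0) := by
  intro y hy a b
  have hl' : l ≠ 0 := hl.ne'
  have hy' : y 0 ≠ 0 := hy.ne'
  have hC : Real.cosh (y 1 / l) ^ 2 = Real.sinh (y 1 / l) ^ 2 + 1 := Real.cosh_sq _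
  have hT : Real.sin (y 2) ^ 2 + Real.cos (y 2) ^ 2 = 1 := Real.sin_sq_add_cos_sq _
  have hP : Real.sin (y 3) ^ 2 + Real.cos (y 3) ^ 2 = 1 := Real.sin_sq_add_cos_sq _
  have hD : mdot (F19 l y) (F19 l y) = -(l ^ 4 / (y 0) ^ 2) := by
    simp [mdot, F19, Fin.sum_univ_four, etaS]
    linear_combination (-(l ^ 4 / (y 0) ^ 2) * Real.cosh (y 1 / l) ^ 2 * Real.sin (y 2) ^ 2) * hP
      + (-(l ^ 4 / (y 0) ^ 2) * Real.cosh (y 1 / l) ^ 2) * hT + (-(l ^ 4 / (y 0) ^ 2)) * hC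
  have hA : ∀ c : Fin 4, (∑ μ, etaS μ * F19 l y μ * Jm l y μ c)
      = ![l ^ 4 / (y 0) ^ 3, (0:ℝ), 0, 0] c := by
    intro c
    fin_cases c <;> simp [Fin.sum_univ_four, etaS, F19, Jm, Matrix.vecHead, Matrix.vecTail]
    · linear_combination (l ^ 4 / (y 0) ^ 3 * Real.cosh (y 1 / l) ^ 2 * Real.sin (y 2) ^ 2) * hP
        + (l ^ 4 / (y 0) ^ 3 * Real.cosh (y 1 / l) ^ 2) * hT + (l ^ 4 / (y 0) ^ 3) * hC
    · linear_combination (-(l ^ 3 / (y 0) ^ 2) * Real.sinh (y 1 / l) * Real.cosh (y 1 / l) * Real.sin (y 2) ^ 2) * hP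
        + (-(l ^ 3 / (y 0) ^ 2) * Real.sinh (y 1 / l) * Real.cosh (y 1 / l)) * hT
    · linear_combination (-(l ^ 4 / (y 0) ^ 2) * Real.cosh (y 1 / l) ^ 2 * Real.sin (y 2) * Real.cos (y 2)) * hP
    · ring1
  have hB : ∀ c d : Fin 4, (∑ μ, etaS μ * Jm l y μ c * Jm l y μ d)
      = ![![-(l ^ 4 / (y 0) ^ 4), (0:ℝ), 0, 0],
          ![0, l ^ 2 / (y 0) ^ 2, 0, 0],
          ![0, 0, -(l ^ 4 * Real.cosh (y 1 / l) ^ 2 / (y 0) ^ 2), 0],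
          ![0, 0, 0, -(l ^ 4 * Real.cosh (y 1 / l) ^ 2 * Real.sin (y 2) ^ 2 / (y 0) ^ 2)]] c d := by
    intro c d
    fin_cases c <;> fin_cases d <;> simp [Fin.sum_univ_four, etaS, Jm, Matrix.vecHead, Matrix.vecTail]
    · linear_combination (-(l ^ 4 / (y 0) ^ 4) * Real.cosh (y 1 / l) ^ 2 * Real.sin (y 2) ^ 2) * hP
        + (-(l ^ 4 / (y 0) ^ 4) * Real.cosh (y 1 / l) ^ 2) * hT + (-(l ^ 4 / (y 0) ^ 4)) * hC
    · linear_combination (l ^ 3 / (y 0) ^ 3 * Real.sinh (y 1 / l) * Real.cosh (y 1 / l) * Real.sin (y 2) ^ 2) * hP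
        + (l ^ 3 / (y 0) ^ 3 * Real.sinh (y 1 / l) * Real.cosh (y 1 / l)) * hT
    · linear_combination (l ^ 4 / (y 0) ^ 3 * Real.cosh (y 1 / l) ^ 2 * Real.sin (y 2) * Real.cos (y 2)) * hP
    · ring1
    · linear_combination (l ^ 3 / (y 0) ^ 3 * Real.sinh (y 1 / l) * Real.cosh (y 1 / l) * Real.sin (y 2) ^ 2) * hP
        + (l ^ 3 / (y 0) ^ 3 * Real.sinh (y 1 / l) * Real.cosh (y 1 / l)) * hT
    · linear_combination (l ^ 2 / (y 0) ^ 2) * hC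
        + (-(l ^ 2 / (y 0) ^ 2) * Real.sinh (y 1 / l) ^ 2 * Real.sin (y 2) ^ 2) * hP
        + (-(l ^ 2 / (y 0) ^ 2) * Real.sinh (y 1 / l) ^ 2) * hT
    · linear_combination (-(l ^ 3 / (y 0) ^ 2) * Real.sinh (y 1 / l) * Real.cosh (y 1 / l) * Real.sin (y 2) * Real.cos (y 2)) * hP
    · ring1
    · linear_combination (l ^ 4 / (y 0) ^ 3 * Real.cosh (y 1 / l) ^ 2 * Real.sin (y 2) * Real.cos (y 2)) * hP
    · linear_combination (-(l ^ 3 / (y 0) ^ 2) * Real.sinh (y 1 / l) * Real.cosh (y 1 / l) * Real.sin (y 2) * Real.cos (y 2)) * hP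
    · linear_combination (-(l ^ 4 * Real.cosh (y 1 / l) ^ 2 / (y 0) ^ 2) * Real.cos (y 2) ^ 2) * hP
        + (-(l ^ 4 * Real.cosh (y 1 / l) ^ 2 / (y 0) ^ 2)) * hT
    · ring1
    · ring1
    · ring1
    · ring1
    · linear_combination (-(l ^ 4 * Real.cosh (y 1 / l) ^ 2 / (y 0) ^ 2) * Real.sin (y 2) ^ 2) * hP
  simp only [pd_F19 l hl' y hy']
  have gten_eq : ∀ (x : Fin 4 → ℝ) (μ ν : Fin 4), gten l 1 x μ ν
      = l ^ 2 / (mdot x x) ^ 2 * (etaS μ * x μ * (etaS ν * x ν) - etaM μ ν * mdot x x) := by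
    intro x μ ν
    fin_cases μ <;> fin_cases ν <;>
      simp [gten, etaM, etaS, mdot, Fin.sum_univ_four] <;> first | ring1 | (refine Or.inl ?_; ring1)
  have key : (∑ μ, ∑ ν, gten l 1 (F19 l y) μ ν * Jm l y μ a * Jm l y ν b)
      = l ^ 2 / (mdot (F19 l y) (F19 l y)) ^ 2 *
        ((∑ μ, etaS μ * F19 l y μ * Jm l y μ a) * (∑ ν, etaS ν * F19 l y ν * Jm l y ν b)
          - mdot (F19 l y) (F19 l y) * (∑ μ, etaS μ * Jm l y μ a * Jm l y μ b)) := by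
    simp only [Fin.sum_univ_four, gten_eq]
    simp [etaM, etaS]
    ring
  rw [key, hA a, hA b, hB a b, hD]
  fin_cases a <;> fin_cases b <;> (try simp [Matrix.vecHead, Matrix.vecTail]) <;> (try field_simp) <;> (try first | ring1 | (refine Or.inr ?_; ring1) | (refine Or.inl (Or.inl ?_); ring1) | (refine Or.inl ?_; ring1))
end
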